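/- Let ξ, ς, c, τ, ϱ ∈ [0, ∞) and r ∈ [1, ∞), and assume that ξ ≤ τ·ε^{−ϱ}·ς + ε^r·c for all ε > 0. Then ξ ≤ (τ + 1)·(ς^{r/(r+ϱ)}·c^{ϱ/(r+ϱ)} + ς). -/

import Mathlib

/-- Proposition 2.3 (Young-type absorption lemma): if `ξ, ς, c, τ, ϱ ≥ 0`, `r ≥ 1`, and
`ξ ≤ τ ε^(-ϱ) ς + ε^r c` for all `ε > 0`, then
`ξ ≤ (τ + 1)(ς^(r/(r+ϱ)) c^(ϱ/(r+ϱ)) + ς)`. -/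
theorem young_absorption (ξ ς c τ ϱ r : ℝ)
    (hξ : 0 ≤ ξ) (hς : 0 ≤ ς) (hc : 0 ≤ c) (hτ : 0 ≤ τ) (hϱ : 0 ≤ ϱ) (hr : 1 ≤ r)
    (h : ∀ ε : ℝ, 0 < ε → ξ ≤ τ * ε ^ (-ϱ) * ς + ε ^ r * c) :
    ξ ≤ (τ + 1) * (ς ^ (r / (r + ϱ)) * c ^ (ϱ / (r + ϱ)) + ς) := by
  have hrϱ : 0 < r + ϱ := by linarith
  have hrne : r ≠ 0 := by positivity
  rcases eq_or_lt_of_le hς with hς0 | hςpos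
  · -- ς = 0
    have hξ0 : ξ ≤ 0 := by
      by_contra hpos
      push_neg at hpos
      rcases eq_or_lt_of_le hc with hc0 | hcpos
      · have h1 := h 1 one_pos
        rw [← hς0, ← hc0] at h1
        simp at h1
        linarith
      · set ε := (ξ / (2 * c)) ^ (r⁻¹) with hεdef
        have hεpos : 0 < ε := Real.rpow_pos_of_pos (by positivity) _
        have hεr : ε ^ r = ξ / (2 * c) := by
          rw [hεdef, ← Real.rpow_mul (by positivity), inv_mul_cancel₀ hrne,
            Real.rpow_one]
        have h1 := h ε hεpos
        rw [← hς0, hεr] at h1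
        have he : ξ / (2 * c) * c = ξ / 2 := by field_simp
        rw [mul_zero, zero_add, he] at h1
        linarith
    have hz : ς ^ (r / (r + ϱ)) = 0 := by
      rw [← hς0, Real.zero_rpow (by positivity)]
    rw [hz, ← hς0]
    simpa using hξ0
  · rcases eq_or_lt_of_le hc with hc0 | hcpos
    · -- c = 0
      have h1 := h 1 one_pos
      rw [Real.one_rpow, Real.one_rpow, ← hc0] at h1
      have hterm : 0 ≤ ς ^ (r / (r + ϱ)) * c ^ (ϱ / (r + ϱ)) := by positivity
      nlinarith
    · -- main case
      set s := (r + ϱ)⁻¹ with hsdef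
      have hspos : 0 < s := by positivity
      set ε := ς ^ s * c ^ (-s) with hεdef
      have hεpos : 0 < ε :=
        mul_pos (Real.rpow_pos_of_pos hςpos _) (Real.rpow_pos_of_pos hcpos _)
      have h1 := h ε hεpos
      have e : ε ^ (-ϱ) = ς ^ (s * (-ϱ)) * c ^ ((-s) * (-ϱ)) := by
        rw [hεdef, Real.mul_rpow (by positivity) (by positivity),
          ← Real.rpow_mul hς, ← Real.rpow_mul hc]
      have e' : ε ^ r = ς ^ (s * r) * c ^ ((-s) * r) := by
        rw [hεdef, Real.mul_rpow (by positivity) (by positivity),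
          ← Real.rpow_mul hς, ← Real.rpow_mul hc]
      have eς : ς ^ (s * (-ϱ)) * ς = ς ^ (r / (r + ϱ)) := by
        have t : ς ^ (s * (-ϱ)) * ς ^ (1 : ℝ) = ς ^ (s * (-ϱ) + 1) :=
          (Real.rpow_add hςpos _ _).symm
        rw [Real.rpow_one] at t
        rw [t]
        congr 1
        rw [hsdef]
        field_simp
        ring
      have ec : c ^ ((-s) * (-ϱ)) = c ^ (ϱ / (r + ϱ)) := by
        congr 1
        rw [hsdef]
        field_simp
      have eς2 : ς ^ (s * r) = ς ^ (r / (r + ϱ)) := by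
        congr 1
        rw [hsdef]
        field_simp
      have ec2 : c ^ ((-s) * r) * c = c ^ (ϱ / (r + ϱ)) := by
        have t : c ^ ((-s) * r) * c ^ (1 : ℝ) = c ^ ((-s) * r + 1) :=
          (Real.rpow_add hcpos _ _).symm
        rw [Real.rpow_one] at t
        rw [t]
        congr 1
        rw [hsdef]
        field_simp
        ring
      have key : τ * ε ^ (-ϱ) * ς + ε ^ r * c
          = (τ + 1) * (ς ^ (r / (r + ϱ)) * c ^ (ϱ / (r + ϱ))) := by
        rw [e, e']
        have rearr : τ * (ς ^ (s * -ϱ) * c ^ (-s * -ϱ)) * ς + ς ^ (s * r) * c ^ (-s * r) * c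
            = τ * (ς ^ (s * -ϱ) * ς) * c ^ (-s * -ϱ) + ς ^ (s * r) * (c ^ (-s * r) * c) := by
          ring
        rw [rearr, eς, ec, eς2, ec2]
        ring
      rw [key] at h1
      nlinarith [mul_pos (Real.rpow_pos_of_pos hςpos (r / (r + ϱ)))
        (Real.rpow_pos_of_pos hcpos (ϱ / (r + ϱ)))]
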